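/- Let s ≥ 1, let i₁ > i₂ > … > i_s ≥ 1 be integers, let m₁,…,m_s ≥ 1, and set r = ∑_{v=1}^s m_v i_v. Let 𝒜 be the family of N = ∑_v m_v consecutive intervals partitioning {1,…,r}: first m₁ intervals of length i₁, then m₂ intervals of length i₂, and so on. Set ℬ = ⋃_{A∈𝒜} (A \ {min A}) and 𝒞 = {max A : A ∈ 𝒜}. Let λ ∈ ℂ[x] and let φ ∈ Mat_{r×r}(ℂ[x]) be the block-diagonal matrix whose diagonal blocks, in order, are the Jordan blocks J_{|A|}(λ) for A ∈ 𝒜. Then the ideal I_φ of ℂ[x][z₁,…,z_r] satisfies I_φ = (z_b z_c : b ∈ ℬ, c ∈ 𝒞) + I_𝒜, where I_𝒜 is generated by the binomials z_a z_{b+1} − z_b z_{a+1} for all a, b such that {a, a+1} is contained in some interval of 𝒜 and {b, b+1} is contained in some (possibly different or equal) interval of 𝒜. Moreover the radical of I_φ is the ideal (z_a : a ∈ ℬ). -/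

import Mathlib

open MvPolynomial

/-- The variable `z_{k+1}` (0-based index `k`) of `R[z₁,…,z_r]`, or `0` if `k ≥ r`. -/
noncomputable def Zv (R : Type*) [CommRing R] (r k : ℕ) : MvPolynomial (Fin r) R :=
  if h : k < r then X ⟨k, h⟩ else 0

/-- The ideal `I_M` of `R[z₁,…,z_r]` generated by `∑ₖ z_k (M_{jk} z_i − M_{ik} z_j)`
for all pairs `i < j`. -/
noncomputable def higgsIdeal {R : Type*} [CommRing R] {r : ℕ}
    (M : Matrix (Fin r) (Fin r) R) : Ideal (MvPolynomial (Fin r) R) :=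
  Ideal.span { p | ∃ i j : Fin r, i < j ∧
    p = ∑ k : Fin r, X k * (C (M j k) * X i - C (M i k) * X j) }

/-- The (0-based) starting indices of the consecutive intervals of lengths given by `L`
partitioning `{0,…,L.sum − 1}`. -/
def starts (L : List ℕ) : List ℕ := (List.range L.length).map fun t => (L.take t).sum

/-- The block-diagonal matrix whose diagonal blocks are Jordan blocks with the single
eigenvalue `lam`, along the consecutive intervals of lengths given by `L`. -/
noncomputable def jordanBlocks (R : Type*) [CommRing R] (r : ℕ) (L : List ℕ) (lam : R) :
    Matrix (Fin r) (Fin r) R :=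
  Matrix.of fun a b =>
    if (a : ℕ) = (b : ℕ) then lam
    else if (b : ℕ) = (a : ℕ) + 1 ∧ (b : ℕ) ∉ starts L then 1 else 0

noncomputable def Ev (R : Type*) [CommRing R] (r : ℕ) (L : List ℕ) (a : ℕ) :
    MvPolynomial (Fin r) R :=
  if (a+1) ∈ starts L then 0 else Zv R r (a+1)

lemma rowSum {R : Type*} [CommRing R] {r : ℕ} {L : List ℕ} (lam : R) (i : Fin r) :
    ∑ k : Fin r, X k * C ((jordanBlocks R r L lam) i k) = C lam * X i + Ev R r L i := by
  by_cases h : (i:ℕ)+1 < r ∧ (i:ℕ)+1 ∉ starts L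
  · set i' : Fin r := ⟨(i:ℕ)+1, h.1⟩ with hi'
    have hne : i ≠ i' := by
      intro he
      have : (i:ℕ) = (i:ℕ)+1 := congrArg Fin.val he
      omega
    have : ∑ k : Fin r, X k * C ((jordanBlocks R r L lam) i k)
        = ∑ k ∈ ({i, i'} : Finset (Fin r)), X k * C ((jordanBlocks R r L lam) i k) := by
      refine (Finset.sum_subset (Finset.subset_univ _) ?_).symm
      intro k _ hk
      simp only [Finset.mem_insert, Finset.mem_singleton] at hk
      push_neg at hk
      have h1 : (i:ℕ) ≠ (k:ℕ) := fun he => hk.1 (Fin.ext he.symm)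
      have h2 : (k:ℕ) ≠ (i:ℕ)+1 := by
        intro he; exact hk.2 (Fin.ext (by simp [hi', he]))
      simp [jordanBlocks, h1, h2]
    rw [this, Finset.sum_pair hne]
    have e1 : (jordanBlocks R r L lam) i i = lam := by simp [jordanBlocks]
    have e2 : (jordanBlocks R r L lam) i i' = 1 := by
      simp [jordanBlocks, hi', h.2, Nat.succ_ne_self]
    rw [e1, e2]
    simp [Ev, Zv, h.1, h.2, hi', mul_comm]
  · have : ∑ k : Fin r, X k * C ((jordanBlocks R r L lam) i k)
        = ∑ k ∈ ({i} : Finset (Fin r)), X k * C ((jordanBlocks R r L lam) i k) := by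
      refine (Finset.sum_subset (Finset.subset_univ _) ?_).symm
      intro k _ hk
      simp only [Finset.mem_singleton] at hk
      have h1 : (i:ℕ) ≠ (k:ℕ) := fun he => hk (Fin.ext he.symm)
      have h2 : ¬((k:ℕ) = (i:ℕ)+1 ∧ (k:ℕ) ∉ starts L) := by
        rintro ⟨he, hns⟩
        exact h ⟨he ▸ k.isLt, he ▸ hns⟩
      simp [jordanBlocks, h1, h2]
    rw [this, Finset.sum_singleton]
    have e1 : (jordanBlocks R r L lam) i i = lam := by simp [jordanBlocks]
    rw [e1]
    have : Ev R r L (i:ℕ) = 0 := by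
      by_cases hm : (i:ℕ)+1 ∈ starts L
      · simp [Ev, hm]
      · have : ¬ ((i:ℕ)+1 < r) := fun hlt => h ⟨hlt, hm⟩
        simp [Ev, hm, Zv, this]
    rw [this]
    ring
open MvPolynomial

lemma gen_eq {R : Type*} [CommRing R] {r : ℕ} {L : List ℕ} (lam : R) (i j : Fin r) :
    ∑ k : Fin r, X k * (C ((jordanBlocks R r L lam) j k) * X i
        - C ((jordanBlocks R r L lam) i k) * X j)
      = Ev R r L j * X i - Ev R r L i * X j := by
  have : ∑ k : Fin r, X k * (C ((jordanBlocks R r L lam) j k) * X i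
        - C ((jordanBlocks R r L lam) i k) * X j)
      = (∑ k : Fin r, X k * C ((jordanBlocks R r L lam) j k)) * X i
        - (∑ k : Fin r, X k * C ((jordanBlocks R r L lam) i k)) * X j := by
    rw [Finset.sum_mul, Finset.sum_mul, ← Finset.sum_sub_distrib]
    exact Finset.sum_congr rfl fun k _ => by ring
  rw [this, rowSum lam i, rowSum lam j]
  ring

lemma Zv_coe {R : Type*} [CommRing R] {r : ℕ} (i : Fin r) : Zv R r (i:ℕ) = X i := by
  simp [Zv, i.isLt]

lemma Zv_lt {R : Type*} [CommRing R] {r : ℕ} {a : ℕ} (h : a < r) :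
    Zv R r a = X ⟨a, h⟩ := by simp [Zv, h]

lemma Ev_eq {R : Type*} [CommRing R] {r : ℕ} {L : List ℕ} {a : ℕ}
    (h : (a+1) ∉ starts L) : Ev R r L a = Zv R r (a+1) := by simp [Ev, h]

lemma Ev_eq_zero {R : Type*} [CommRing R] {r : ℕ} {L : List ℕ} {a : ℕ}
    (h : ¬((a+1) < r ∧ (a+1) ∉ starts L)) : Ev R r L a = 0 := by
  by_cases hm : (a+1) ∈ starts L
  · simp [Ev, hm]
  · have : ¬ (a+1 < r) := fun hlt => h ⟨hlt, hm⟩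
    simp [Ev, hm, Zv, this]

lemma ideal_eq {R : Type*} [CommRing R] {r : ℕ} {L : List ℕ} (lam : R)
    (h0 : (0:ℕ) ∈ starts L) :
    higgsIdeal (jordanBlocks R r L lam) =
      Ideal.span { p | ∃ b c : ℕ, (b < r ∧ b ∉ starts L) ∧
        (c < r ∧ (c + 1 = r ∨ (c + 1) ∈ starts L)) ∧
        p = Zv R r b * Zv R r c } +
      Ideal.span { p | ∃ a b : ℕ,
        (a + 1 < r ∧ (a + 1) ∉ starts L) ∧ (b + 1 < r ∧ (b + 1) ∉ starts L) ∧
        p = Zv R r a * Zv R r (b + 1) - Zv R r b * Zv R r (a + 1) } := by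
  apply le_antisymm
  · rw [higgsIdeal, Ideal.span_le]
    rintro p ⟨i, j, hij, rfl⟩
    rw [gen_eq]
    by_cases hi : (i:ℕ)+1 < r ∧ (i:ℕ)+1 ∉ starts L
    · by_cases hj : (j:ℕ)+1 < r ∧ (j:ℕ)+1 ∉ starts L
      · apply Submodule.mem_sup_right
        apply Ideal.subset_span
        refine ⟨i, j, hi, hj, ?_⟩
        rw [Ev_eq hi.2, Ev_eq hj.2, ← Zv_coe i, ← Zv_coe j]
        ring
      · rw [Ev_eq_zero hj]
        apply Submodule.mem_sup_left
        rw [show (0:MvPolynomial (Fin r) R) * X i - Ev R r L i * X j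
            = -(Ev R r L i * X j) by ring]
        apply neg_mem
        apply Ideal.subset_span
        refine ⟨(i:ℕ)+1, (j:ℕ), hi, ⟨j.isLt, ?_⟩, ?_⟩
        · rcases Nat.lt_or_ge ((j:ℕ)+1) r with h | h
          · exact Or.inr (not_not.mp fun hn => hj ⟨h, hn⟩)
          · exact Or.inl (le_antisymm (j.isLt) h)
        · rw [Ev_eq hi.2, ← Zv_coe j]
    · rw [Ev_eq_zero hi]
      by_cases hj : (j:ℕ)+1 < r ∧ (j:ℕ)+1 ∉ starts L
      · apply Submodule.mem_sup_left
        rw [show Ev R r L j * X i - (0:MvPolynomial (Fin r) R) * X j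
            = Ev R r L j * X i by ring]
        apply Ideal.subset_span
        refine ⟨(j:ℕ)+1, (i:ℕ), hj, ⟨i.isLt, ?_⟩, ?_⟩
        · rcases Nat.lt_or_ge ((i:ℕ)+1) r with h | h
          · exact Or.inr (not_not.mp fun hn => hi ⟨h, hn⟩)
          · exact Or.inl (le_antisymm (i.isLt) h)
        · rw [Ev_eq hj.2, ← Zv_coe i]
      · rw [Ev_eq_zero hj]
        simp
  · apply sup_le
    · rw [Ideal.span_le]
      rintro p ⟨b, c, ⟨hbr, hbs⟩, ⟨hcr, hc1⟩, rfl⟩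
      obtain ⟨b', rfl⟩ : ∃ b'', b = b'' + 1 := by
        rcases Nat.eq_zero_or_pos b with h | h
        · exact absurd (h ▸ h0) hbs
        · exact ⟨b - 1, by omega⟩
      have hbP : b'+1 < r ∧ b'+1 ∉ starts L := ⟨hbr, hbs⟩
      have hcP : ¬((c+1) < r ∧ (c+1) ∉ starts L) := by
        rintro ⟨h1, h2⟩
        rcases hc1 with h | h
        · omega
        · exact h2 h
      have hne : c ≠ b' := by
        intro he
        subst he
        rcases hc1 with h | h
        · omega
        · exact hbs h
      rcases Nat.lt_or_ge c b' with hlt | hge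
      · rw [higgsIdeal]
        apply Ideal.subset_span
        refine ⟨⟨c, hcr⟩, ⟨b', by omega⟩, by simp [Fin.lt_def, hlt], ?_⟩
        rw [gen_eq, Ev_eq_zero hcP, Ev_eq hbP.2, ← Zv_lt hcr]
        ring
      · have hlt : b' < c := by omega
        rw [higgsIdeal]
        rw [show Zv R r (b'+1) * Zv R r c
            = -(Ev R r L c * X (⟨b', by omega⟩ : Fin r) - Ev R r L b' * X ⟨c, hcr⟩) by
          rw [Ev_eq_zero hcP, Ev_eq hbP.2, ← Zv_lt hcr]
          ring]
        apply neg_mem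
        apply Ideal.subset_span
        refine ⟨⟨b', by omega⟩, ⟨c, hcr⟩, by simp [Fin.lt_def, hlt], ?_⟩
        rw [gen_eq]
    · rw [Ideal.span_le]
      rintro p ⟨a, b, haP, hbP, rfl⟩
      rcases lt_trichotomy a b with hab | hab | hab
      · rw [higgsIdeal]
        apply Ideal.subset_span
        refine ⟨⟨a, by omega⟩, ⟨b, by omega⟩, by simp [Fin.lt_def, hab], ?_⟩
        rw [gen_eq, Ev_eq haP.2, Ev_eq hbP.2, ← Zv_lt (show a < r by omega),
          ← Zv_lt (show b < r by omega)]
        ring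
      · subst hab; simp [sub_self]
      · rw [higgsIdeal]
        rw [show Zv R r a * Zv R r (b+1) - Zv R r b * Zv R r (a+1)
            = -(Ev R r L a * X (⟨b, by omega⟩ : Fin r)
              - Ev R r L b * X (⟨a, by omega⟩ : Fin r)) by
          rw [Ev_eq haP.2, Ev_eq hbP.2, ← Zv_lt (show a < r by omega),
            ← Zv_lt (show b < r by omega)]
          ring]
        apply neg_mem
        apply Ideal.subset_span
        refine ⟨⟨b, by omega⟩, ⟨a, by omega⟩, by simp [Fin.lt_def, hab], ?_⟩
        rw [gen_eq]

lemma varIdeal_radical {R : Type*} [CommRing R] [IsDomain R] {r : ℕ} (L : List ℕ) :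
    (Ideal.span { p : MvPolynomial (Fin r) R |
        ∃ a : ℕ, a < r ∧ a ∉ starts L ∧ p = Zv R r a }).radical
      = Ideal.span { p : MvPolynomial (Fin r) R |
        ∃ a : ℕ, a < r ∧ a ∉ starts L ∧ p = Zv R r a } := by
  set P : Ideal (MvPolynomial (Fin r) R) :=
    Ideal.span { p | ∃ a : ℕ, a < r ∧ a ∉ starts L ∧ p = Zv R r a } with hP
  set f : MvPolynomial (Fin r) R →ₐ[R] MvPolynomial (Fin r) R :=
    aeval (fun k : Fin r => if (k:ℕ) ∈ starts L then X k else 0) with hf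
  have hfX : ∀ k : Fin r, f (X k) = if (k:ℕ) ∈ starts L then X k else 0 := by
    intro k; rw [hf, aeval_X]
  have hker : ∀ p ∈ P, f p = 0 := by
    have : P ≤ RingHom.ker f.toRingHom := by
      rw [hP, Ideal.span_le]
      rintro p ⟨a, har, has, rfl⟩
      simp only [SetLike.mem_coe, RingHom.mem_ker, AlgHom.toRingHom_eq_coe,
        RingHom.coe_coe]
      rw [Zv_lt har, hfX]
      simp [has]
    intro p hp
    exact this hp
  have hsub : ∀ p : MvPolynomial (Fin r) R, p - f p ∈ P := by
    intro p
    induction p using MvPolynomial.induction_on with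
    | C a => simp
    | add p q hp hq =>
      rw [map_add, show p + q - (f p + f q) = (p - f p) + (q - f q) by ring]
      exact add_mem hp hq
    | mul_X p k hp =>
      have hXk : X k - f (X k) ∈ P := by
        rw [hfX]
        by_cases hk : (k:ℕ) ∈ starts L
        · simp [hk]
        · simp only [hk, if_neg, if_false, sub_zero]
          exact Ideal.subset_span ⟨(k:ℕ), k.isLt, hk, (Zv_coe k).symm⟩
      rw [map_mul, show p * X k - f p * f (X k)
          = p * (X k - f (X k)) + f (X k) * (p - f p) by ring]
      exact add_mem (Ideal.mul_mem_left _ _ hXk) (Ideal.mul_mem_left _ _ hp)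
  refine le_antisymm ?_ Ideal.le_radical
  intro q hq
  obtain ⟨n, hn⟩ := Ideal.mem_radical_iff.mp hq
  have hfq : f q ^ n = 0 := by rw [← map_pow]; exact hker _ hn
  have hn0 : n ≠ 0 := by
    rintro rfl
    rw [pow_zero] at hfq
    exact one_ne_zero hfq
  have : f q = 0 := pow_eq_zero_iff hn0 |>.mp hfq
  have := hsub q
  rwa [‹f q = 0›, sub_zero] at this

lemma mono_mem {R : Type*} [CommRing R] {r : ℕ} {L : List ℕ} (lam : R)
    (h0 : (0:ℕ) ∈ starts L) {b c : ℕ} (hb : b < r) (hbs : b ∉ starts L)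
    (hc : c < r) (hc1 : c+1 = r ∨ (c+1) ∈ starts L) :
    Zv R r b * Zv R r c ∈ higgsIdeal (jordanBlocks R r L lam) := by
  rw [ideal_eq lam h0]
  exact Submodule.mem_sup_left (Ideal.subset_span ⟨b, c, ⟨hb, hbs⟩, ⟨hc, hc1⟩, rfl⟩)

lemma binom_mem {R : Type*} [CommRing R] {r : ℕ} {L : List ℕ} (lam : R)
    (h0 : (0:ℕ) ∈ starts L) {a b : ℕ} (ha : a+1 < r) (has : a+1 ∉ starts L)
    (hb : b+1 < r) (hbs : b+1 ∉ starts L) :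
    Zv R r a * Zv R r (b+1) - Zv R r b * Zv R r (a+1)
      ∈ higgsIdeal (jordanBlocks R r L lam) := by
  rw [ideal_eq lam h0]
  exact Submodule.mem_sup_right (Ideal.subset_span ⟨a, b, ⟨ha, has⟩, ⟨hb, hbs⟩, rfl⟩)

lemma zpow_in_ideal {R : Type*} [CommRing R] {r : ℕ} {L : List ℕ} (lam : R)
    (h0 : (0:ℕ) ∈ starts L) :
    ∀ d a, r - a ≤ d → a < r → a ∉ starts L →
      ∃ n : ℕ, Zv R r a ^ (n+1) ∈ higgsIdeal (jordanBlocks R r L lam) := by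
  intro d
  induction d with
  | zero => intro a h1 h2 _; omega
  | succ d ih =>
    intro a hd har has
    by_cases hP : a+1 < r ∧ a+1 ∉ starts L
    · obtain ⟨a', rfl⟩ : ∃ a'', a = a'' + 1 := by
        rcases Nat.eq_zero_or_pos a with h | h
        · exact absurd (h ▸ h0) has
        · exact ⟨a - 1, by omega⟩
      obtain ⟨n, hn⟩ := ih (a'+1+1) (by omega) hP.1 hP.2
      have hg : Zv R r a' * Zv R r ((a'+1)+1) - Zv R r (a'+1) * Zv R r (a'+1)
          ∈ higgsIdeal (jordanBlocks R r L lam) :=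
        binom_mem lam h0 har has hP.1 hP.2
      set I := higgsIdeal (jordanBlocks R r L lam)
      set z := Zv R r (a'+1)
      set y := Zv R r a' * Zv R r ((a'+1)+1) with hy
      have hxy : z^2 - y ∈ I := by
        rw [show z^2 - y = -(y - z * z) by ring]
        exact neg_mem hg
      have hyn : y^(n+1) ∈ I := by
        rw [hy, mul_pow]
        exact Ideal.mul_mem_left _ _ hn
      refine ⟨2*(n+1) - 1, ?_⟩
      have h2 : 2*(n+1) - 1 + 1 = 2*(n+1) := by omega
      rw [h2, pow_mul]
      obtain ⟨t, ht⟩ := sub_dvd_pow_sub_pow (z^2) y (n+1)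
      have : (z^2)^(n+1) = (z^2 - y) * t + y^(n+1) := by rw [← ht]; ring
      rw [this]
      exact add_mem (Ideal.mul_mem_right _ _ hxy) hyn
    · have hc1 : a+1 = r ∨ (a+1) ∈ starts L := by
        rcases Nat.lt_or_ge (a+1) r with h | h
        · exact Or.inr (not_not.mp fun hn => hP ⟨h, hn⟩)
        · exact Or.inl (by omega)
      exact ⟨1, by rw [show (1:ℕ)+1 = 2 from rfl, sq]; exact mono_mem lam h0 har has har hc1⟩

lemma radical_eq {R : Type*} [CommRing R] [IsDomain R] {r : ℕ} {L : List ℕ} (lam : R)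
    (h0 : (0:ℕ) ∈ starts L) :
    (higgsIdeal (jordanBlocks R r L lam)).radical =
      Ideal.span { p : MvPolynomial (Fin r) R |
        ∃ a : ℕ, a < r ∧ a ∉ starts L ∧ p = Zv R r a } := by
  set P : Ideal (MvPolynomial (Fin r) R) :=
    Ideal.span { p | ∃ a : ℕ, a < r ∧ a ∉ starts L ∧ p = Zv R r a } with hP
  have hEv : ∀ a : ℕ, Ev R r L a ∈ P := by
    intro a
    by_cases hm : (a+1) ∈ starts L
    · rw [Ev]; simp [hm]
    · rw [Ev_eq hm]
      by_cases hlt : a+1 < r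
      · exact Ideal.subset_span ⟨a+1, hlt, hm, rfl⟩
      · rw [Zv]; simp [hlt]
  apply le_antisymm
  · have hIP : higgsIdeal (jordanBlocks R r L lam) ≤ P := by
      rw [higgsIdeal, Ideal.span_le]
      rintro p ⟨i, j, hij, rfl⟩
      rw [gen_eq]
      exact sub_mem (Ideal.mul_mem_right _ _ (hEv j)) (Ideal.mul_mem_right _ _ (hEv i))
    calc (higgsIdeal (jordanBlocks R r L lam)).radical
        ≤ P.radical := Ideal.radical_mono hIP
      _ = P := varIdeal_radical L
  · rw [hP, Ideal.span_le]
    rintro p ⟨a, har, has, rfl⟩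
    obtain ⟨n, hn⟩ := zpow_in_ideal lam h0 (r - a) a le_rfl har has
    exact Ideal.mem_radical_iff.mpr ⟨n+1, hn⟩

/-- Proposition 3.7: for a Higgs field over `ℂ[x]` consisting of Jordan blocks of sizes
`i₁ > … > i_s` with multiplicities `m₁,…,m_s` and a single eigenvalue `λ ∈ ℂ[x]`, the
ideal `I_φ` equals `(z_b z_c : b ∈ ℬ, c ∈ 𝒞) + I_𝒜`, and its radical is `(z_a : a ∈ ℬ)`.
Here, 0-based: `ℬ` = non-minimal elements of blocks (non-starts), `𝒞` = maxima of blocks,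
and `I_𝒜` is generated by `z_a z_{b+1} − z_b z_{a+1}` for `a, a+1` in a common block and
`b, b+1` in a common block. -/
theorem stmt3 (s : ℕ) (hs : 1 ≤ s) (iv m : Fin s → ℕ)
    (hdec : StrictAnti iv) (hipos : ∀ v, 1 ≤ iv v) (hmpos : ∀ v, 1 ≤ m v)
    (r : ℕ) (hr : r = ∑ v, m v * iv v) (lam : Polynomial ℂ)
    (L : List ℕ) (hL : L = (List.ofFn fun v => List.replicate (m v) (iv v)).flatten) :
    higgsIdeal (jordanBlocks (Polynomial ℂ) r L lam) =
      Ideal.span { p | ∃ b c : ℕ, (b < r ∧ b ∉ starts L) ∧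
        (c < r ∧ (c + 1 = r ∨ (c + 1) ∈ starts L)) ∧
        p = Zv (Polynomial ℂ) r b * Zv (Polynomial ℂ) r c } +
      Ideal.span { p | ∃ a b : ℕ,
        (a + 1 < r ∧ (a + 1) ∉ starts L) ∧ (b + 1 < r ∧ (b + 1) ∉ starts L) ∧
        p = Zv (Polynomial ℂ) r a * Zv (Polynomial ℂ) r (b + 1)
          - Zv (Polynomial ℂ) r b * Zv (Polynomial ℂ) r (a + 1) } ∧
    (higgsIdeal (jordanBlocks (Polynomial ℂ) r L lam)).radical =
      Ideal.span { p | ∃ a : ℕ, a < r ∧ a ∉ starts L ∧ p = Zv (Polynomial ℂ) r a } := by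
  have hlen : 0 < L.length := by
    rw [hL]
    by_contra h
    push_neg at h
    have hnil : (List.ofFn fun v => List.replicate (m v) (iv v)).flatten = [] :=
      List.length_eq_zero_iff.mp (by omega)
    rw [List.flatten_eq_nil_iff] at hnil
    have hmem : List.replicate (m ⟨0, hs⟩) (iv ⟨0, hs⟩)
        ∈ List.ofFn fun v => List.replicate (m v) (iv v) :=
      List.mem_ofFn.mpr ⟨⟨0, hs⟩, rfl⟩
    have := hnil _ hmem
    have hm0 := hmpos ⟨0, hs⟩
    simp [List.replicate_eq_nil_iff] at this
    omega
  have h0 : (0:ℕ) ∈ starts L := by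
    rw [starts]
    exact List.mem_map.mpr ⟨0, List.mem_range.mpr hlen, by simp⟩
  exact ⟨ideal_eq lam h0, radical_eq lam h0⟩
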